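/- Let C and D be nonempty nearly convex subsets of X such that ri C ∩ ri D ≠ ∅. Then ri(C ∩ D) = ri C ∩ ri D. -/

import Mathlib

open Set Pointwise

/-- A set is nearly convex if it is sandwiched between a convex set and its closure. -/
def NearlyConvex {X : Type*} [NormedAddCommGroup X] [NormedSpace ℝ X] (S : Set X) : Prop :=
  ∃ C : Set X, Convex ℝ C ∧ C ⊆ S ∧ S ⊆ closure C

/-- Two sets are nearly equal if they have the same closure and the same relative
(intrinsic) interior. -/
def NearEq {X : Type*} [NormedAddCommGroup X] [NormedSpace ℝ X] (C D : Set X) : Prop :=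
  closure C = closure D ∧ intrinsicInterior ℝ C = intrinsicInterior ℝ D

section Aux

open Metric

set_option linter.unusedSectionVars false

variable {X : Type*} [NormedAddCommGroup X] [NormedSpace ℝ X] [FiniteDimensional ℝ X]

lemma closure_subset_affineSpan' (s : Set X) : closure s ⊆ (affineSpan ℝ s : Set X) :=
  (affineSpan ℝ s).closed_of_finiteDimensional.closure_subset_iff.2 (subset_affineSpan ℝ s)

lemma affineSpan_closure' (s : Set X) : affineSpan ℝ (closure s) = affineSpan ℝ s :=
  le_antisymm (affineSpan_le.2 (closure_subset_affineSpan' s)) (affineSpan_mono ℝ subset_closure)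

lemma mem_ri {s : Set X} {x : X} :
    x ∈ intrinsicInterior ℝ s ↔
      x ∈ affineSpan ℝ s ∧ ∃ ε > 0, ∀ y ∈ affineSpan ℝ s, dist y x < ε → y ∈ s := by
  rw [mem_intrinsicInterior]
  constructor
  · rintro ⟨⟨y, hy⟩, hint, rfl⟩
    refine ⟨hy, ?_⟩
    rw [mem_interior_iff_mem_nhds, Metric.mem_nhds_iff] at hint
    obtain ⟨ε, hε, hball⟩ := hint
    refine ⟨ε, hε, fun z hz hdist => ?_⟩
    exact hball (show (⟨z, hz⟩ : affineSpan ℝ s) ∈ ball _ ε by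
      simpa [Metric.mem_ball, Subtype.dist_eq] using hdist)
  · rintro ⟨hx, ε, hε, h⟩
    refine ⟨⟨x, hx⟩, ?_, rfl⟩
    rw [mem_interior_iff_mem_nhds, Metric.mem_nhds_iff]
    exact ⟨ε, hε, fun z hz => h z z.2 (by simpa [Metric.mem_ball, Subtype.dist_eq] using hz)⟩

set_option linter.unusedSectionVars false

/-- Relative openness: anything in the ball ∩ span witnessing `z ∈ ri s` is itself in `ri s`. -/
lemma ball_mem_ri {s : Set X} {z w : X} {ε : ℝ}
    (hball : ∀ y ∈ affineSpan ℝ s, dist y z < ε → y ∈ s)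
    (hw : w ∈ affineSpan ℝ s) (hdist : dist w z < ε) : w ∈ intrinsicInterior ℝ s := by
  rw [mem_ri]
  refine ⟨hw, ε - dist w z, by linarith, fun u hu hud => hball u hu ?_⟩
  calc dist u z ≤ dist u w + dist w z := dist_triangle _ _ _
    _ < ε := by linarith

/-- Segment principle: open segment between a relative interior point and a closure point
lies in the relative interior. -/
lemma ri_segment {s : Set X} (hs : Convex ℝ s) {x y : X} (hx : x ∈ intrinsicInterior ℝ s)
    (hy : y ∈ closure s) {t : ℝ} (ht0 : 0 < t) (ht1 : t < 1) :
    (1 - t) • x + t • y ∈ intrinsicInterior ℝ s := by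
  rw [mem_ri] at hx ⊢
  obtain ⟨hxs, ε, hε, H⟩ := hx
  have hys : y ∈ affineSpan ℝ s := closure_subset_affineSpan' s hy
  have h1t : (0:ℝ) < 1 - t := by linarith
  have hzspan : (1 - t) • x + t • y ∈ affineSpan ℝ s := by
    have h := (affineSpan ℝ s).smul_vsub_vadd_mem t hys hxs hxs
    rw [vsub_eq_sub, vadd_eq_add] at h
    have he : (1 - t) • x + t • y = t • (y - x) + x := by module
    rwa [he]
  refine ⟨hzspan, (1 - t) * ε / 2, by positivity, fun w hw hwd => ?_⟩
  set z := (1 - t) • x + t • y with hzdef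
  have hδ : (0:ℝ) < (1 - t) * ε / (2 * t) := by positivity
  obtain ⟨y', hy's, hy'd⟩ := Metric.mem_closure_iff.1 hy _ hδ
  set x' := (1 - t)⁻¹ • (w - t • y') with hx'def
  have hy'span : y' ∈ affineSpan ℝ s := subset_affineSpan ℝ s hy's
  have hx'span : x' ∈ affineSpan ℝ s := by
    have heq : x' = (t / (1 - t)) • (w - y') + w := by
      rw [hx'def]
      match_scalars <;> field_simp <;> ring
    rw [heq]
    simpa [vsub_eq_sub, vadd_eq_add] using
      (affineSpan ℝ s).smul_vsub_vadd_mem (t / (1 - t)) hw hy'span hw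
  have hx'dist : dist x' x < ε := by
    have heq : x' - x = (1 - t)⁻¹ • ((w - z) + t • (y - y')) := by
      rw [hx'def, hzdef]
      match_scalars <;> field_simp <;> ring
    have hn : ‖x' - x‖ ≤ (1 - t)⁻¹ * (‖w - z‖ + t * ‖y - y'‖) := by
      rw [heq, norm_smul, Real.norm_eq_abs, abs_of_pos (by positivity)]
      gcongr
      calc ‖w - z + t • (y - y')‖ ≤ ‖w - z‖ + ‖t • (y - y')‖ := norm_add_le _ _
        _ = ‖w - z‖ + t * ‖y - y'‖ := by
            rw [norm_smul, Real.norm_eq_abs, abs_of_pos ht0]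
    have h1 : ‖w - z‖ < (1 - t) * ε / 2 := by rwa [← dist_eq_norm]
    have h2 : ‖y - y'‖ < (1 - t) * ε / (2 * t) := by rwa [dist_eq_norm] at hy'd
    rw [dist_eq_norm]
    calc ‖x' - x‖ ≤ (1 - t)⁻¹ * (‖w - z‖ + t * ‖y - y'‖) := hn
      _ < (1 - t)⁻¹ * ((1 - t) * ε / 2 + t * ((1 - t) * ε / (2 * t))) := by
          gcongr
      _ = ε := by field_simp; ring
  have hx's : x' ∈ s := H x' hx'span hx'dist
  have hcombo : (1 - t) • x' + t • y' ∈ s :=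
    hs hx's hy's h1t.le ht0.le (by ring)
  have : (1 - t) • x' + t • y' = w := by
    rw [hx'def, smul_smul, mul_inv_cancel₀ h1t.ne', one_smul, sub_add_cancel]
  rwa [this] at hcombo

lemma ri_closure_eq {s : Set X} (hs : Convex ℝ s) (hne : s.Nonempty) :
    intrinsicInterior ℝ (closure s) = intrinsicInterior ℝ s := by
  apply Subset.antisymm
  · intro z hz
    rw [mem_ri, affineSpan_closure'] at hz
    obtain ⟨hzs, ε, hε, H⟩ := hz
    obtain ⟨x, hx⟩ := hne.intrinsicInterior hs
    have hxri := hx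
    rw [mem_ri] at hx
    obtain ⟨hxs, _, _, _⟩ := hx
    set μ : ℝ := ε / (‖z - x‖ + 1) with hμdef
    have hμ : 0 < μ := by positivity
    set y := μ • (z - x) + z with hydef
    have hyspan : y ∈ affineSpan ℝ s := by
      simpa [vsub_eq_sub, vadd_eq_add] using
        (affineSpan ℝ s).smul_vsub_vadd_mem μ hzs hxs hzs
    have hyd : dist y z < ε := by
      rw [hydef, dist_eq_norm, add_sub_cancel_right, norm_smul, Real.norm_eq_abs,
        abs_of_pos hμ, hμdef]
      rw [div_mul_eq_mul_div, div_lt_iff₀ (by positivity)]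
      nlinarith [norm_nonneg (z - x)]
    have hycl : y ∈ closure s := H y hyspan hyd
    set t : ℝ := 1 / (1 + μ) with htdef
    have ht0 : 0 < t := by positivity
    have ht1 : t < 1 := by
      rw [htdef, div_lt_one (by positivity)]; linarith
    have hz' : (1 - t) • x + t • y = z := by
      rw [hydef, htdef]
      have h1μ : (1:ℝ) + μ ≠ 0 := by positivity
      match_scalars <;> field_simp <;> ring
    have := ri_segment hs hxri hycl ht0 ht1
    rwa [hz'] at this
  · intro x hx
    rw [mem_ri] at hx ⊢
    rw [affineSpan_closure']
    obtain ⟨hxs, ε, hε, H⟩ := hx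
    exact ⟨hxs, ε, hε, fun y hy hyd => subset_closure (H y hy hyd)⟩

lemma ri_sandwich {c d : Set X} (hc : Convex ℝ c) (hcne : c.Nonempty)
    (h1 : c ⊆ d) (h2 : d ⊆ closure c) :
    intrinsicInterior ℝ d = intrinsicInterior ℝ c := by
  have hspan : affineSpan ℝ d = affineSpan ℝ c :=
    le_antisymm (affineSpan_le.2 (h2.trans (closure_subset_affineSpan' c)))
      (affineSpan_mono ℝ h1)
  apply Subset.antisymm
  · intro x hx
    rw [← ri_closure_eq hc hcne, mem_ri, affineSpan_closure']
    rw [mem_ri, hspan] at hx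
    obtain ⟨hxs, ε, hε, H⟩ := hx
    exact ⟨hxs, ε, hε, fun y hy hyd => h2 (H y hy hyd)⟩
  · intro x hx
    rw [mem_ri] at hx ⊢
    rw [hspan]
    obtain ⟨hxs, ε, hε, H⟩ := hx
    exact ⟨hxs, ε, hε, fun y hy hyd => h1 (H y hy hyd)⟩

lemma ri_convex {s : Set X} (hs : Convex ℝ s) : Convex ℝ (intrinsicInterior ℝ s) := by
  intro x hx y hy a b ha hb hab
  rcases eq_or_lt_of_le hb with hb0 | hb0
  · have ha1 : a = 1 := by linarith
    simp [← hb0, ha1, hx]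
  rcases eq_or_lt_of_le (show b ≤ 1 by linarith) with hb1 | hb1
  · have ha0 : a = 0 := by linarith
    simp [hb1, ha0, hy]
  have ha' : a = 1 - b := by linarith
  rw [ha']
  exact ri_segment hs hx (subset_closure (intrinsicInterior_subset hy)) hb0 hb1

lemma closure_inter_ri {c d : Set X} (hc : Convex ℝ c) (hd : Convex ℝ d)
    {x₀ : X} (hx₀ : x₀ ∈ intrinsicInterior ℝ c ∩ intrinsicInterior ℝ d)
    {y : X} (hy : y ∈ closure c ∩ closure d) :
    y ∈ closure (intrinsicInterior ℝ c ∩ intrinsicInterior ℝ d) := by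
  rw [Metric.mem_closure_iff]
  intro δ hδ
  set u : ℝ := δ / (‖y - x₀‖ + 1) with hudef
  have hu0 : 0 < u := by positivity
  set t : ℝ := max (1/2) (1 - u) with htdef
  have ht0 : 0 < t := lt_of_lt_of_le (by norm_num) (le_max_left _ _)
  have ht1 : t < 1 := by
    rw [htdef, max_lt_iff]
    constructor <;> [norm_num; linarith]
  refine ⟨(1 - t) • x₀ + t • y,
    ⟨ri_segment hc hx₀.1 hy.1 ht0 ht1, ri_segment hd hx₀.2 hy.2 ht0 ht1⟩, ?_⟩
  have heq : y - ((1 - t) • x₀ + t • y) = (1 - t) • (y - x₀) := by module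
  rw [dist_eq_norm, heq, norm_smul, Real.norm_eq_abs, abs_of_pos (by linarith)]
  have h1t : 1 - t ≤ u := by
    rw [htdef]
    have := le_max_right (1/2 : ℝ) (1 - u)
    linarith
  calc (1 - t) * ‖y - x₀‖ ≤ u * ‖y - x₀‖ := by
        apply mul_le_mul_of_nonneg_right h1t (norm_nonneg _)
    _ < δ := by
        rw [hudef, div_mul_eq_mul_div, div_lt_iff₀ (by positivity)]
        nlinarith [norm_nonneg (y - x₀)]


end Aux

/-- If `C` and `D` are nonempty nearly convex subsets of a finite-dimensional real inner
product space with `ri C ∩ ri D ≠ ∅`, then `ri (C ∩ D) = ri C ∩ ri D`. -/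
theorem intrinsicInterior_inter {X : Type*} [NormedAddCommGroup X] [InnerProductSpace ℝ X]
    [FiniteDimensional ℝ X] (C D : Set X) (hCne : C.Nonempty) (hDne : D.Nonempty)
    (hC : NearlyConvex C) (hD : NearlyConvex D)
    (hri : (intrinsicInterior ℝ C ∩ intrinsicInterior ℝ D).Nonempty) :
    intrinsicInterior ℝ (C ∩ D) = intrinsicInterior ℝ C ∩ intrinsicInterior ℝ D := by
  obtain ⟨c, hc, hcC, hCc⟩ := hC
  obtain ⟨d, hd, hdD, hDd⟩ := hD
  have hcne : c.Nonempty := by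
    rw [← closure_nonempty_iff]; exact hCne.mono hCc
  have hdne : d.Nonempty := by
    rw [← closure_nonempty_iff]; exact hDne.mono hDd
  have hriC : intrinsicInterior ℝ C = intrinsicInterior ℝ c := ri_sandwich hc hcne hcC hCc
  have hriD : intrinsicInterior ℝ D = intrinsicInterior ℝ d := ri_sandwich hd hdne hdD hDd
  rw [hriC, hriD] at hri ⊢
  set K := intrinsicInterior ℝ c ∩ intrinsicInterior ℝ d with hKdef
  obtain ⟨x₀, hx₀⟩ := hri
  have hKconv : Convex ℝ K := (ri_convex hc).inter (ri_convex hd)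
  have h1 : K ⊆ C ∩ D :=
    inter_subset_inter (intrinsicInterior_subset.trans hcC) (intrinsicInterior_subset.trans hdD)
  have h2 : C ∩ D ⊆ closure K := fun y hy =>
    closure_inter_ri hc hd hx₀ ⟨hCc hy.1, hDd hy.2⟩
  have hmain : intrinsicInterior ℝ (C ∩ D) = intrinsicInterior ℝ K :=
    ri_sandwich hKconv ⟨x₀, hx₀⟩ h1 h2
  rw [hmain]
  apply Subset.antisymm intrinsicInterior_subset
  intro z hz
  have hzc := hz.1
  have hzd := hz.2
  rw [mem_ri] at hzc hzd ⊢
  obtain ⟨hzcs, ε₁, hε₁, H₁⟩ := hzc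
  obtain ⟨hzds, ε₂, hε₂, H₂⟩ := hzd
  have hKc : affineSpan ℝ K ≤ affineSpan ℝ c :=
    affineSpan_mono ℝ ((inter_subset_left).trans intrinsicInterior_subset)
  have hKd : affineSpan ℝ K ≤ affineSpan ℝ d :=
    affineSpan_mono ℝ ((inter_subset_right).trans intrinsicInterior_subset)
  refine ⟨subset_affineSpan ℝ K hz, min ε₁ ε₂, lt_min hε₁ hε₂, fun w hw hwd => ?_⟩
  exact ⟨ball_mem_ri H₁ (hKc hw) (hwd.trans_le (min_le_left _ _)),
    ball_mem_ri H₂ (hKd hw) (hwd.trans_le (min_le_right _ _))⟩
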